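/- For every integer p ≥ 2 and every complex number s with Re s > 1, ∫_0^∞ x^{2s−1}·( coth(px)/sinh(2x) − 1/(2p·sinh²(x)) ) dx = 2^{1−2s}·Γ(2s)·( ∑_{m,n≥0} (1+2m+pn)^{−2s} + ∑_{m,n≥0} (1+p+2m+pn)^{−2s} − (1/p)·∑_{m,n≥0} (1+m+n)^{−2s} ), where each double sum over pairs of nonnegative integers (m, n) converges absolutely. -/

import Mathlib

open Real Complex MeasureTheory

/-- The elliptic fixed-point integrand `g_p(x) = coth(px)/sinh(2x) - 1/(2p sinh²x)`. -/
noncomputable def ellipticIntegrand (p : ℕ) (x : ℝ) : ℝ :=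
  Real.cosh (p * x) / Real.sinh (p * x) / Real.sinh (2 * x) -
    1 / (2 * p * Real.sinh x ^ 2)

/-- `HasSum` on a sum type from `HasSum` on both summands. -/
lemma HasSum.sumElim' {M α β : Type*} [AddCommMonoid M] [TopologicalSpace M] [ContinuousAdd M]
    {f : α → M} {g : β → M} {a b : M}
    (hf : HasSum f a) (hg : HasSum g b) : HasSum (Sum.elim f g) (a + b) := by
  have h1 : HasSum (fun x : Set.range (Sum.inl : α → α ⊕ β) => Sum.elim f g x) a := by
    rw [Sum.inl_injective.hasSum_range_iff]; exact hf
  have h2 : HasSum (fun x : ↥(Set.range (Sum.inl : α → α ⊕ β))ᶜ => Sum.elim f g x) b := by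
    rw [show (Set.range (Sum.inl : α → α ⊕ β))ᶜ = Set.range (Sum.inr : β → α ⊕ β) from
      Set.compl_range_inl]
    rw [Sum.inr_injective.hasSum_range_iff]; exact hg
  exact h1.add_compl h2

/-- The basic two-dimensional zeta summability. -/
lemma summable_core {t : ℝ} (ht : 2 < t) :
    Summable fun mn : ℕ × ℕ => ((1 + mn.1 + mn.2 : ℕ) : ℝ) ^ (-t) := by
  have ht2 : (1 : ℝ) < t / 2 := by linarith
  have h1 : Summable fun m : ℕ => ((m : ℝ) + 1) ^ (-(t / 2)) := by
    have h := Real.summable_nat_rpow_inv.mpr ht2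
    rw [← summable_nat_add_iff 1] at h
    refine h.congr fun n => ?_
    rw [Real.rpow_neg (by positivity)]
    push_cast
    ring_nf
  refine Summable.of_nonneg_of_le (fun mn => by positivity)
    (fun mn => ?_) (h1.mul_of_nonneg h1 (fun m => by positivity) (fun n => by positivity))
  rcases mn with ⟨m, n⟩
  dsimp only
  rw [← Real.mul_rpow (by positivity) (by positivity)]
  have hb : (0 : ℝ) < ((m : ℝ) + 1) * ((n : ℝ) + 1) := by positivity
  have hle : ((m : ℝ) + 1) * ((n : ℝ) + 1) ≤ (((1 + m + n : ℕ) : ℝ)) ^ (2 : ℕ) := by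
    push_cast
    nlinarith [Nat.cast_nonneg (α := ℝ) m, Nat.cast_nonneg (α := ℝ) n,
      mul_nonneg (Nat.cast_nonneg (α := ℝ) m) (Nat.cast_nonneg (α := ℝ) n)]
  calc ((1 + m + n : ℕ) : ℝ) ^ (-t)
      = ((((1 + m + n : ℕ) : ℝ)) ^ (2 : ℕ)) ^ (-(t / 2)) := by
        rw [← Real.rpow_natCast (((1 + m + n : ℕ) : ℝ)) 2, ← Real.rpow_mul (by positivity)]
        congr 1; ring
    _ ≤ (((m : ℝ) + 1) * ((n : ℝ) + 1)) ^ (-(t / 2)) :=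
        Real.rpow_le_rpow_of_nonpos hb hle (by linarith)

/-- Comparison version of the two-dimensional zeta summability. -/
lemma summable_ofBound {t : ℝ} (ht : 2 < t) {B : ℕ × ℕ → ℕ}
    (hB : ∀ mn, 1 + mn.1 + mn.2 ≤ B mn) :
    Summable fun mn : ℕ × ℕ => ((B mn : ℝ)) ^ (-t) := by
  refine (summable_core ht).of_nonneg_of_le (fun mn => by positivity) (fun mn => ?_)
  exact Real.rpow_le_rpow_of_nonpos (by positivity) (by exact_mod_cast hB mn) (by linarith)

/-- Pointwise expansion of the elliptic integrand as a sum of exponentials. -/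
lemma elliptic_expand (p : ℕ) (hp : 2 ≤ p) {x : ℝ} (hx : 0 < x) :
    HasSum (Sum.elim
      (fun mn : ℕ × ℕ => 2 * rexp (-(2 * ((1 + 2 * mn.1 + p * mn.2 : ℕ) : ℝ)) * x))
      (Sum.elim
        (fun mn : ℕ × ℕ => 2 * rexp (-(2 * ((1 + p + 2 * mn.1 + p * mn.2 : ℕ) : ℝ)) * x))
        (fun mn : ℕ × ℕ => -(2 / (p : ℝ)) * rexp (-(2 * ((1 + mn.1 + mn.2 : ℕ) : ℝ)) * x))))
      (ellipticIntegrand p x) := by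
  have hppos : 0 < p := by omega
  have hpne : (p : ℝ) ≠ 0 := Nat.cast_ne_zero.mpr hppos.ne'
  set q : ℝ := rexp (-(2 * x)) with hq_def
  have hq0 : 0 < q := Real.exp_pos _
  have hq1 : q < 1 := Real.exp_lt_one_iff.mpr (by linarith)
  have hq1' : (0:ℝ) < 1 - q := by linarith
  have hq2 : q ^ 2 < 1 := by nlinarith
  have hqp : q ^ p < 1 := pow_lt_one₀ hq0.le hq1 hppos.ne'
  have hq2' : (0:ℝ) < 1 - q ^ 2 := by linarith
  have hqp' : (0:ℝ) < 1 - q ^ p := by linarith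
  have key : ∀ k : ℕ, rexp (-(2 * (k : ℝ)) * x) = q ^ k := by
    intro k
    rw [← Real.exp_nat_mul]
    congr 1; ring
  have g2 : HasSum (fun m : ℕ => (q ^ 2) ^ m) (1 - q ^ 2)⁻¹ :=
    hasSum_geometric_of_lt_one (by positivity) hq2
  have gp : HasSum (fun n : ℕ => (q ^ p) ^ n) (1 - q ^ p)⁻¹ :=
    hasSum_geometric_of_lt_one (by positivity) hqp
  have g1 : HasSum (fun n : ℕ => q ^ n) (1 - q)⁻¹ :=
    hasSum_geometric_of_lt_one hq0.le hq1
  have hprod1 : HasSum (fun mn : ℕ × ℕ => (q ^ 2) ^ mn.1 * (q ^ p) ^ mn.2)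
      ((1 - q ^ 2)⁻¹ * (1 - q ^ p)⁻¹) :=
    g2.mul gp (g2.summable.mul_of_nonneg gp.summable (fun _ => by positivity)
      (fun _ => by positivity))
  have hprod3 : HasSum (fun mn : ℕ × ℕ => q ^ mn.1 * q ^ mn.2)
      ((1 - q)⁻¹ * (1 - q)⁻¹) :=
    g1.mul g1 (g1.summable.mul_of_nonneg g1.summable (fun _ => by positivity)
      (fun _ => by positivity))
  have S1 : HasSum (fun mn : ℕ × ℕ => 2 * rexp (-(2 * ((1 + 2 * mn.1 + p * mn.2 : ℕ) : ℝ)) * x))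
      (2 * q * ((1 - q ^ 2)⁻¹ * (1 - q ^ p)⁻¹)) := by
    have heq : (fun mn : ℕ × ℕ => 2 * rexp (-(2 * ((1 + 2 * mn.1 + p * mn.2 : ℕ) : ℝ)) * x)) =
        fun mn : ℕ × ℕ => 2 * q * ((q ^ 2) ^ mn.1 * (q ^ p) ^ mn.2) := by
      funext mn
      rw [key, pow_add, pow_add, pow_one, pow_mul, pow_mul]
      ring
    rw [heq]
    exact hprod1.mul_left _
  have S2 : HasSum
      (fun mn : ℕ × ℕ => 2 * rexp (-(2 * ((1 + p + 2 * mn.1 + p * mn.2 : ℕ) : ℝ)) * x))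
      (2 * q ^ (1 + p) * ((1 - q ^ 2)⁻¹ * (1 - q ^ p)⁻¹)) := by
    have heq : (fun mn : ℕ × ℕ =>
        2 * rexp (-(2 * ((1 + p + 2 * mn.1 + p * mn.2 : ℕ) : ℝ)) * x)) =
        fun mn : ℕ × ℕ => 2 * q ^ (1 + p) * ((q ^ 2) ^ mn.1 * (q ^ p) ^ mn.2) := by
      funext mn
      rw [key, pow_add, pow_add, pow_mul, pow_mul]
      ring
    rw [heq]
    exact hprod1.mul_left _
  have S3 : HasSum
      (fun mn : ℕ × ℕ => -(2 / (p : ℝ)) * rexp (-(2 * ((1 + mn.1 + mn.2 : ℕ) : ℝ)) * x))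
      (-(2 / (p : ℝ)) * q * ((1 - q)⁻¹ * (1 - q)⁻¹)) := by
    have heq : (fun mn : ℕ × ℕ =>
        -(2 / (p : ℝ)) * rexp (-(2 * ((1 + mn.1 + mn.2 : ℕ) : ℝ)) * x)) =
        fun mn : ℕ × ℕ => -(2 / (p : ℝ)) * q * (q ^ mn.1 * q ^ mn.2) := by
      funext mn
      rw [key, pow_add, pow_add, pow_one]
      ring
    rw [heq]
    exact hprod3.mul_left _
  have total := S1.sumElim' (S2.sumElim' S3)
  convert total using 1
  have hexp : ∀ y : ℝ, rexp y ≠ 0 := fun y => (Real.exp_pos y).ne'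
  have hqp_exp : rexp ((p : ℝ) * x) * q ^ p = rexp (-((p : ℝ) * x)) := by
    rw [← Real.exp_nat_mul, ← Real.exp_add]
    congr 1; ring
  have hsinhpx : Real.sinh ((p : ℝ) * x) = rexp ((p : ℝ) * x) * (1 - q ^ p) / 2 := by
    rw [Real.sinh_eq, ← hqp_exp]; ring
  have hcoshpx : Real.cosh ((p : ℝ) * x) = rexp ((p : ℝ) * x) * (1 + q ^ p) / 2 := by
    rw [Real.cosh_eq, ← hqp_exp]; ring
  have hfrac : Real.cosh ((p : ℝ) * x) / Real.sinh ((p : ℝ) * x) = (1 + q ^ p) / (1 - q ^ p) := by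
    rw [hcoshpx, hsinhpx]
    field_simp
  have hE2 : rexp (2 * x) = q⁻¹ := by
    rw [hq_def, ← Real.exp_neg]; congr 1; ring
  have hsinh2x : Real.sinh (2 * x) = (1 - q ^ 2) / (2 * q) := by
    rw [Real.sinh_eq, hE2, ← hq_def]
    field_simp
  have hxx : rexp (2 * x) = rexp x ^ 2 := by
    rw [show (2 : ℝ) * x = ((2 : ℕ) : ℝ) * x by push_cast; ring, Real.exp_nat_mul]
  have hqe : q = (rexp x ^ 2)⁻¹ := by
    rw [hq_def, Real.exp_neg, hxx]
  have hsinhsq : Real.sinh x ^ 2 = (1 - q) ^ 2 / (4 * q) := by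
    rw [Real.sinh_eq, Real.exp_neg, hqe]
    field_simp
    ring
  show ellipticIntegrand p x = _
  rw [ellipticIntegrand, hfrac, hsinh2x, hsinhsq]
  have h1 : (1 - q : ℝ) ≠ 0 := hq1'.ne'
  have h2 : (1 - q ^ 2 : ℝ) ≠ 0 := hq2'.ne'
  have h3 : (1 - q ^ p : ℝ) ≠ 0 := hqp'.ne'
  field_simp
  ring

/-- Key coefficient computation. -/
lemma coeff_eq (s : ℂ) (w : ℂ) (k : ℕ) :
    Complex.Gamma (2*s) * (2 * w) / (((2*(k:ℝ)) : ℝ) : ℂ) ^ (2*s)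
      = (2:ℂ)^(1-2*s) * Complex.Gamma (2*s) * (w * (((k:ℝ) : ℂ)) ^ (-(2*s))) := by
  have hk0 : (0:ℝ) ≤ (k:ℝ) := by positivity
  have h1 : (((2*(k:ℝ)) : ℝ) : ℂ) = ((2:ℝ):ℂ) * ((k:ℝ):ℂ) := by push_cast; ring
  rw [h1, mul_cpow_ofReal_nonneg (by norm_num) hk0]
  rw [Complex.cpow_neg, sub_eq_add_neg, Complex.cpow_add _ _ (by norm_num : (2:ℂ) ≠ 0),
    Complex.cpow_one, Complex.cpow_neg]
  have h2 : ((2:ℝ):ℂ) = (2:ℂ) := by norm_cast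
  rw [h2, div_eq_mul_inv, mul_inv]
  ring

/-- Norm of a complex power of a positive natural base. -/
lemma norm_cpow_nat (s : ℂ) (k : ℕ) (hk : 0 < k) :
    ‖(((k:ℝ)):ℂ) ^ (-(2*s))‖ = ((k:ℝ)) ^ (-(2*s.re)) := by
  rw [Complex.norm_cpow_eq_rpow_re_of_pos (by exact_mod_cast hk)]
  congr 1
  simp

theorem elliptic_mellin_eq_barnes (p : ℕ) (hp : 2 ≤ p) (s : ℂ) (hs : 1 < s.re) :
    (Summable fun mn : ℕ × ℕ =>
        ‖(1 + 2 * (mn.1 : ℂ) + p * mn.2) ^ (-(2 * s))‖) ∧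
    (Summable fun mn : ℕ × ℕ =>
        ‖(1 + (p : ℂ) + 2 * mn.1 + p * mn.2) ^ (-(2 * s))‖) ∧
    (Summable fun mn : ℕ × ℕ =>
        ‖(1 + (mn.1 : ℂ) + mn.2) ^ (-(2 * s))‖) ∧
    ∫ x in Set.Ioi (0 : ℝ), (x : ℂ) ^ (2 * s - 1) * (ellipticIntegrand p x : ℂ) =
      (2 : ℂ) ^ (1 - 2 * s) * Complex.Gamma (2 * s) *
        ((∑' mn : ℕ × ℕ, (1 + 2 * (mn.1 : ℂ) + p * mn.2) ^ (-(2 * s))) +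
          (∑' mn : ℕ × ℕ, (1 + (p : ℂ) + 2 * mn.1 + p * mn.2) ^ (-(2 * s))) -
          (1 / p) * ∑' mn : ℕ × ℕ, (1 + (mn.1 : ℂ) + mn.2) ^ (-(2 * s))) := by
  have hppos : 0 < p := by omega
  have hs2 : 0 < (2*s).re := by
    have h : (2*s).re = 2*s.re := by simp
    rw [h]; linarith
  have ht : (2:ℝ) < 2*s.re := by linarith
  have hre : (2*s).re = 2*s.re := by simp
  -- index bounds
  have hA : ∀ mn : ℕ × ℕ, 1 + mn.1 + mn.2 ≤ 1 + 2*mn.1 + p*mn.2 := by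
    intro mn
    have h2 : mn.2 ≤ p * mn.2 := Nat.le_mul_of_pos_left _ hppos
    omega
  have hB : ∀ mn : ℕ × ℕ, 1 + mn.1 + mn.2 ≤ 1 + p + 2*mn.1 + p*mn.2 := by
    intro mn
    have h2 : mn.2 ≤ p * mn.2 := Nat.le_mul_of_pos_left _ hppos
    omega
  have sA := summable_ofBound ht (B := fun mn => 1 + 2*mn.1 + p*mn.2) hA
  have sB := summable_ofBound ht (B := fun mn => 1 + p + 2*mn.1 + p*mn.2) hB
  have sC := summable_ofBound ht (B := fun mn => 1 + mn.1 + mn.2) (fun mn => le_refl _)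
  -- base cast identities
  have hbA : ∀ mn : ℕ × ℕ, (((1 + 2*mn.1 + p*mn.2 : ℕ) : ℝ) : ℂ)
      = 1 + 2 * (mn.1 : ℂ) + p * mn.2 := by intro mn; push_cast; ring
  have hbB : ∀ mn : ℕ × ℕ, (((1 + p + 2*mn.1 + p*mn.2 : ℕ) : ℝ) : ℂ)
      = 1 + (p : ℂ) + 2 * mn.1 + p * mn.2 := by intro mn; push_cast; ring
  have hbC : ∀ mn : ℕ × ℕ, (((1 + mn.1 + mn.2 : ℕ) : ℝ) : ℂ)
      = 1 + (mn.1 : ℂ) + mn.2 := by intro mn; push_cast; ring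
  have hpA : ∀ mn : ℕ × ℕ, 0 < 1 + 2*mn.1 + p*mn.2 := fun mn => by positivity
  have hpB : ∀ mn : ℕ × ℕ, 0 < 1 + p + 2*mn.1 + p*mn.2 := fun mn => by positivity
  have hpC : ∀ mn : ℕ × ℕ, 0 < 1 + mn.1 + mn.2 := fun mn => by positivity
  -- the three summability statements
  have Sg1 : Summable fun mn : ℕ × ℕ => ‖(1 + 2 * (mn.1 : ℂ) + p * mn.2) ^ (-(2 * s))‖ := by
    refine sA.congr fun mn => ?_
    rw [← hbA mn, norm_cpow_nat s _ (hpA mn)]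
  have Sg2 : Summable fun mn : ℕ × ℕ => ‖(1 + (p : ℂ) + 2 * mn.1 + p * mn.2) ^ (-(2 * s))‖ := by
    refine sB.congr fun mn => ?_
    rw [← hbB mn, norm_cpow_nat s _ (hpB mn)]
  have Sg3 : Summable fun mn : ℕ × ℕ => ‖(1 + (mn.1 : ℂ) + mn.2) ^ (-(2 * s))‖ := by
    refine sC.congr fun mn => ?_
    rw [← hbC mn, norm_cpow_nat s _ (hpC mn)]
  refine ⟨Sg1, Sg2, Sg3, ?_⟩
  -- complex summability
  have cA : Summable fun mn : ℕ × ℕ => (1 + 2 * (mn.1 : ℂ) + p * mn.2) ^ (-(2 * s)) :=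
    Summable.of_norm Sg1
  have cB : Summable fun mn : ℕ × ℕ => (1 + (p : ℂ) + 2 * mn.1 + p * mn.2) ^ (-(2 * s)) :=
    Summable.of_norm Sg2
  have cC : Summable fun mn : ℕ × ℕ => (1 + (mn.1 : ℂ) + mn.2) ^ (-(2 * s)) :=
    Summable.of_norm Sg3
  set c : ℂ := (2:ℂ)^(1-2*s) * Complex.Gamma (2*s) with hc
  -- positivity of the exponents
  have hposR : ∀ k : ℕ, 0 < k → (0:ℝ) < 2 * ((k:ℕ):ℝ) := by
    intro k hk
    have : (0:ℝ) < (k:ℝ) := by exact_mod_cast hk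
    linarith
  -- apply hasSum_mellin
  have hF : ∀ x ∈ Set.Ioi (0:ℝ),
      HasSum (fun i : (ℕ×ℕ) ⊕ ((ℕ×ℕ) ⊕ (ℕ×ℕ)) =>
        (Sum.elim (fun _ : ℕ×ℕ => (2:ℂ))
          (Sum.elim (fun _ : ℕ×ℕ => (2:ℂ)) (fun _ : ℕ×ℕ => -(2/(p:ℂ)))) i) *
        rexp (-(Sum.elim (fun mn : ℕ×ℕ => 2*((1 + 2*mn.1 + p*mn.2 : ℕ):ℝ))
          (Sum.elim (fun mn : ℕ×ℕ => 2*((1 + p + 2*mn.1 + p*mn.2 : ℕ):ℝ))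
            (fun mn : ℕ×ℕ => 2*((1 + mn.1 + mn.2 : ℕ):ℝ))) i) * x))
      ((ellipticIntegrand p x : ℝ) : ℂ) := by
    intro x hx
    have hreal := elliptic_expand p hp hx
    have funeq : (fun i : (ℕ×ℕ) ⊕ ((ℕ×ℕ) ⊕ (ℕ×ℕ)) =>
        (Sum.elim (fun _ : ℕ×ℕ => (2:ℂ))
          (Sum.elim (fun _ : ℕ×ℕ => (2:ℂ)) (fun _ : ℕ×ℕ => -(2/(p:ℂ)))) i) *
        rexp (-(Sum.elim (fun mn : ℕ×ℕ => 2*((1 + 2*mn.1 + p*mn.2 : ℕ):ℝ))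
          (Sum.elim (fun mn : ℕ×ℕ => 2*((1 + p + 2*mn.1 + p*mn.2 : ℕ):ℝ))
            (fun mn : ℕ×ℕ => 2*((1 + mn.1 + mn.2 : ℕ):ℝ))) i) * x)) =
        fun i => (((Sum.elim
          (fun mn : ℕ × ℕ => 2 * rexp (-(2 * ((1 + 2 * mn.1 + p * mn.2 : ℕ) : ℝ)) * x))
          (Sum.elim
            (fun mn : ℕ × ℕ => 2 * rexp (-(2 * ((1 + p + 2 * mn.1 + p * mn.2 : ℕ) : ℝ)) * x))
            (fun mn : ℕ × ℕ => -(2 / (p : ℝ)) *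
              rexp (-(2 * ((1 + mn.1 + mn.2 : ℕ) : ℝ)) * x))) i : ℝ)) : ℂ) := by
      funext i
      rcases i with mn | mn | mn <;>
        simp only [Sum.elim_inl, Sum.elim_inr] <;> push_cast <;> ring
    rw [funeq]
    exact Complex.hasSum_ofReal.mpr hreal
  have h_sum : Summable fun i : (ℕ×ℕ) ⊕ ((ℕ×ℕ) ⊕ (ℕ×ℕ)) =>
      ‖(Sum.elim (fun _ : ℕ×ℕ => (2:ℂ))
          (Sum.elim (fun _ : ℕ×ℕ => (2:ℂ)) (fun _ : ℕ×ℕ => -(2/(p:ℂ)))) i)‖ /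
        (Sum.elim (fun mn : ℕ×ℕ => 2*((1 + 2*mn.1 + p*mn.2 : ℕ):ℝ))
          (Sum.elim (fun mn : ℕ×ℕ => 2*((1 + p + 2*mn.1 + p*mn.2 : ℕ):ℝ))
            (fun mn : ℕ×ℕ => 2*((1 + mn.1 + mn.2 : ℕ):ℝ))) i) ^ (2*s).re := by
    have sA2 := summable_ofBound ht (B := fun mn => 2*(1 + 2*mn.1 + p*mn.2))
      (fun mn => le_trans (hA mn) (Nat.le_mul_of_pos_left _ (by norm_num)))
    have sB2 := summable_ofBound ht (B := fun mn => 2*(1 + p + 2*mn.1 + p*mn.2))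
      (fun mn => le_trans (hB mn) (Nat.le_mul_of_pos_left _ (by norm_num)))
    have sC2 := summable_ofBound ht (B := fun mn => 2*(1 + mn.1 + mn.2))
      (fun mn => Nat.le_mul_of_pos_left _ (by norm_num))
    have e1 : Summable (fun mn : ℕ×ℕ =>
        ‖(2:ℂ)‖ / (2*((1 + 2*mn.1 + p*mn.2 : ℕ):ℝ)) ^ (2*s).re) := by
      refine (sA2.mul_left 2).congr fun mn => ?_
      rw [hre, Real.rpow_neg (by positivity)]
      have : ((2*(1 + 2*mn.1 + p*mn.2) : ℕ):ℝ) = 2*((1 + 2*mn.1 + p*mn.2 : ℕ):ℝ) := by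
        push_cast; ring
      rw [this]
      simp [div_eq_mul_inv]
    have e2 : Summable (fun mn : ℕ×ℕ =>
        ‖(2:ℂ)‖ / (2*((1 + p + 2*mn.1 + p*mn.2 : ℕ):ℝ)) ^ (2*s).re) := by
      refine (sB2.mul_left 2).congr fun mn => ?_
      rw [hre, Real.rpow_neg (by positivity)]
      have : ((2*(1 + p + 2*mn.1 + p*mn.2) : ℕ):ℝ)
          = 2*((1 + p + 2*mn.1 + p*mn.2 : ℕ):ℝ) := by push_cast; ring
      rw [this]
      simp [div_eq_mul_inv]
    have e3 : Summable (fun mn : ℕ×ℕ =>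
        ‖-(2/(p:ℂ))‖ / (2*((1 + mn.1 + mn.2 : ℕ):ℝ)) ^ (2*s).re) := by
      refine (sC2.mul_left ‖-(2/(p:ℂ))‖).congr fun mn => ?_
      rw [hre, Real.rpow_neg (by positivity)]
      have : ((2*(1 + mn.1 + mn.2) : ℕ):ℝ) = 2*((1 + mn.1 + mn.2 : ℕ):ℝ) := by
        push_cast; ring
      rw [this]
      simp [div_eq_mul_inv]
    have funeq : (fun i : (ℕ×ℕ) ⊕ ((ℕ×ℕ) ⊕ (ℕ×ℕ)) =>
        ‖(Sum.elim (fun _ : ℕ×ℕ => (2:ℂ))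
            (Sum.elim (fun _ : ℕ×ℕ => (2:ℂ)) (fun _ : ℕ×ℕ => -(2/(p:ℂ)))) i)‖ /
          (Sum.elim (fun mn : ℕ×ℕ => 2*((1 + 2*mn.1 + p*mn.2 : ℕ):ℝ))
            (Sum.elim (fun mn : ℕ×ℕ => 2*((1 + p + 2*mn.1 + p*mn.2 : ℕ):ℝ))
              (fun mn : ℕ×ℕ => 2*((1 + mn.1 + mn.2 : ℕ):ℝ))) i) ^ (2*s).re) =
        Sum.elim (fun mn : ℕ×ℕ =>
            ‖(2:ℂ)‖ / (2*((1 + 2*mn.1 + p*mn.2 : ℕ):ℝ)) ^ (2*s).re)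
          (Sum.elim (fun mn : ℕ×ℕ =>
              ‖(2:ℂ)‖ / (2*((1 + p + 2*mn.1 + p*mn.2 : ℕ):ℝ)) ^ (2*s).re)
            (fun mn : ℕ×ℕ =>
              ‖-(2/(p:ℂ))‖ / (2*((1 + mn.1 + mn.2 : ℕ):ℝ)) ^ (2*s).re)) := by
      funext i
      rcases i with mn | mn | mn <;> rfl
    rw [funeq]
    exact ((e1.hasSum.sumElim' (e2.hasSum.sumElim' e3.hasSum))).summable
  have H := hasSum_mellin
    (a := Sum.elim (fun _ : ℕ×ℕ => (2:ℂ))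
      (Sum.elim (fun _ : ℕ×ℕ => (2:ℂ)) (fun _ : ℕ×ℕ => -(2/(p:ℂ)))))
    (p := Sum.elim (fun mn : ℕ×ℕ => 2*((1 + 2*mn.1 + p*mn.2 : ℕ):ℝ))
      (Sum.elim (fun mn : ℕ×ℕ => 2*((1 + p + 2*mn.1 + p*mn.2 : ℕ):ℝ))
        (fun mn : ℕ×ℕ => 2*((1 + mn.1 + mn.2 : ℕ):ℝ))))
    (F := fun x => ((ellipticIntegrand p x : ℝ) : ℂ)) (s := 2*s)
    (fun i => Or.inr (by
      rcases i with mn | mn | mn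
      · exact hposR _ (hpA mn)
      · exact hposR _ (hpB mn)
      · exact hposR _ (hpC mn))) hs2 hF h_sum
  -- the explicit HasSum for the same function
  have HA : HasSum (fun mn : ℕ×ℕ =>
      c * ((1:ℂ) * (1 + 2 * (mn.1 : ℂ) + p * mn.2) ^ (-(2 * s))))
      (c * ((1:ℂ) * ∑' mn : ℕ × ℕ, (1 + 2 * (mn.1 : ℂ) + p * mn.2) ^ (-(2 * s)))) :=
    (cA.hasSum.mul_left _).mul_left c
  have HB : HasSum (fun mn : ℕ×ℕ =>
      c * ((1:ℂ) * (1 + (p : ℂ) + 2 * mn.1 + p * mn.2) ^ (-(2 * s))))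
      (c * ((1:ℂ) * ∑' mn : ℕ × ℕ, (1 + (p : ℂ) + 2 * mn.1 + p * mn.2) ^ (-(2 * s)))) :=
    (cB.hasSum.mul_left _).mul_left c
  have HC : HasSum (fun mn : ℕ×ℕ =>
      c * (-(1/(p:ℂ)) * (1 + (mn.1 : ℂ) + mn.2) ^ (-(2 * s))))
      (c * (-(1/(p:ℂ)) * ∑' mn : ℕ × ℕ, (1 + (mn.1 : ℂ) + mn.2) ^ (-(2 * s)))) :=
    (cC.hasSum.mul_left _).mul_left c
  have g1eq : (fun mn : ℕ×ℕ => Complex.Gamma (2*s) * (2:ℂ) /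
      (((2*((1 + 2*mn.1 + p*mn.2 : ℕ):ℝ) : ℝ)) : ℂ) ^ (2*s)) =
      fun mn : ℕ×ℕ => c * ((1:ℂ) * (1 + 2 * (mn.1 : ℂ) + p * mn.2) ^ (-(2 * s))) := by
    funext mn
    have h := coeff_eq s 1 (1 + 2*mn.1 + p*mn.2)
    rw [mul_one] at h
    rw [h, hbA mn, hc]
  have g2eq : (fun mn : ℕ×ℕ => Complex.Gamma (2*s) * (2:ℂ) /
      (((2*((1 + p + 2*mn.1 + p*mn.2 : ℕ):ℝ) : ℝ)) : ℂ) ^ (2*s)) =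
      fun mn : ℕ×ℕ => c * ((1:ℂ) * (1 + (p : ℂ) + 2 * mn.1 + p * mn.2) ^ (-(2 * s))) := by
    funext mn
    have h := coeff_eq s 1 (1 + p + 2*mn.1 + p*mn.2)
    rw [mul_one] at h
    rw [h, hbB mn, hc]
  have g3eq : (fun mn : ℕ×ℕ => Complex.Gamma (2*s) * (-(2/(p:ℂ))) /
      (((2*((1 + mn.1 + mn.2 : ℕ):ℝ) : ℝ)) : ℂ) ^ (2*s)) =
      fun mn : ℕ×ℕ => c * (-(1/(p:ℂ)) * (1 + (mn.1 : ℂ) + mn.2) ^ (-(2 * s))) := by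
    funext mn
    have h := coeff_eq s (-(1/(p:ℂ))) (1 + mn.1 + mn.2)
    rw [show (2:ℂ) * -(1/(p:ℂ)) = -(2/(p:ℂ)) by ring] at h
    rw [h, hbC mn, hc]
  have H' := (g1eq ▸ HA).sumElim' ((g2eq ▸ HB).sumElim' (g3eq ▸ HC))
  have funeq2 : (fun i : (ℕ×ℕ) ⊕ ((ℕ×ℕ) ⊕ (ℕ×ℕ)) =>
      Complex.Gamma (2*s) *
        (Sum.elim (fun _ : ℕ×ℕ => (2:ℂ))
          (Sum.elim (fun _ : ℕ×ℕ => (2:ℂ)) (fun _ : ℕ×ℕ => -(2/(p:ℂ)))) i) /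
        ((Sum.elim (fun mn : ℕ×ℕ => 2*((1 + 2*mn.1 + p*mn.2 : ℕ):ℝ))
          (Sum.elim (fun mn : ℕ×ℕ => 2*((1 + p + 2*mn.1 + p*mn.2 : ℕ):ℝ))
            (fun mn : ℕ×ℕ => 2*((1 + mn.1 + mn.2 : ℕ):ℝ))) i : ℝ) : ℂ) ^ (2*s)) =
      Sum.elim (fun mn : ℕ×ℕ => Complex.Gamma (2*s) * (2:ℂ) /
          (((2*((1 + 2*mn.1 + p*mn.2 : ℕ):ℝ) : ℝ)) : ℂ) ^ (2*s))
        (Sum.elim (fun mn : ℕ×ℕ => Complex.Gamma (2*s) * (2:ℂ) /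
            (((2*((1 + p + 2*mn.1 + p*mn.2 : ℕ):ℝ) : ℝ)) : ℂ) ^ (2*s))
          (fun mn : ℕ×ℕ => Complex.Gamma (2*s) * (-(2/(p:ℂ))) /
            (((2*((1 + mn.1 + mn.2 : ℕ):ℝ) : ℝ)) : ℂ) ^ (2*s))) := by
    funext i
    rcases i with mn | mn | mn <;> rfl
  rw [funeq2] at H
  have hme : mellin (fun x => ((ellipticIntegrand p x : ℝ) : ℂ)) (2*s)
      = ∫ x in Set.Ioi (0 : ℝ), (x : ℂ) ^ (2 * s - 1) * (ellipticIntegrand p x : ℂ) := by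
    simp only [mellin, smul_eq_mul]
  rw [← hme, H.unique H']
  ring
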